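/- arXiv:1502.06357 — 2 statements merged into one kernel-verified Lean document; each statement's English description precedes it below -/
import Mathlib

section
/- Let (M,τ) be a tracial W*-probability space with τ faithful, and let X_1,…,X_n ∈ M be self-adjoint. If there exist ξ_1,…,ξ_n ∈ L²(M,τ) satisfying the conjugate relations (τ⊗τ)((∂_j P)(X)) = τ(ξ_j P(X)) for all P ∈ ℂ⟨Z_1,…,Z_n⟩ and all j, then for every polynomial P with P(X_1,…,X_n) = 0 one has (∂_j P)(X_1,…,X_n) = 0 for all j = 1,…,n. -/
open scoped TensorProduct InnerProductSpace

/-- `D` is the `j`-th noncommutative derivative on `ℂ⟨Z_1,…,Z_n⟩`. -/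
def IsNCDerivative (n : ℕ) (j : Fin n)
    (D : FreeAlgebra ℂ (Fin n) →ₗ[ℂ] FreeAlgebra ℂ (Fin n) ⊗[ℂ] FreeAlgebra ℂ (Fin n)) :
    Prop :=
  (∀ a b : FreeAlgebra ℂ (Fin n),
      D (a * b) = D a * (1 ⊗ₜ[ℂ] b) + (a ⊗ₜ[ℂ] 1) * D b) ∧
  (∀ i : Fin n,
      D (FreeAlgebra.ι ℂ i) = if i = j then (1 ⊗ₜ[ℂ] 1) else 0)

variable {H : Type*} [NormedAddCommGroup H] [InnerProductSpace ℂ H] [CompleteSpace H]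

/-- `τ ⊗ τ` on the (algebraic) tensor square of `B(H)`. -/
noncomputable def tensorTrace (τ : (H →L[ℂ] H) →ₗ[ℂ] ℂ) :
    (H →L[ℂ] H) ⊗[ℂ] (H →L[ℂ] H) →ₗ[ℂ] ℂ :=
  (TensorProduct.lid ℂ ℂ).toLinearMap.comp (TensorProduct.map τ τ)

theorem tensorTrace_tmul (τ : (H →L[ℂ] H) →ₗ[ℂ] ℂ) (x y : H →L[ℂ] H) :
    tensorTrace τ (x ⊗ₜ[ℂ] y) = τ x * τ y := by
  simp [tensorTrace, smul_eq_mul]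

set_option maxHeartbeats 1000000 in
/-- in a tracial `W*`-probability space `(M, τ)` with `τ` faithful
(and normal, encoded as a σ-weakly convergent sum of vector states), if
`ξ_1,…,ξ_n` in `L²(M,τ)` (presented through the GNS-type space `L` with
embedding `ι` satisfying `⟪ι a, ι b⟫ = τ(a* b)`) satisfy the conjugate relations
`(τ⊗τ)((∂_j P)(X)) = τ(ξ_j P(X)) = ⟪ι((P(X))*), ξ_j⟫` for all polynomials `P`,
then `P(X) = 0` implies `(∂_j P)(X) = 0` for all `j`. -/
theorem stmt4 (n : ℕ) (M : VonNeumannAlgebra H)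
    (τ : (H →L[ℂ] H) →ₗ[ℂ] ℂ)
    (hone : τ 1 = 1)
    (htr : ∀ a ∈ M, ∀ b ∈ M, τ (a * b) = τ (b * a))
    (hpos : ∀ a ∈ M, 0 ≤ (τ (star a * a)).re ∧ (τ (star a * a)).im = 0)
    (hfaith : ∀ a ∈ M, τ (star a * a) = 0 → a = 0)
    (hnormal : ∃ e : ℕ → H, ∀ a ∈ M, τ a = ∑' i, ⟪e i, a (e i)⟫_ℂ)
    (X : Fin n → (H →L[ℂ] H)) (hXM : ∀ i, X i ∈ M) (hXsa : ∀ i, star (X i) = X i)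
    (D : ∀ _ : Fin n,
      FreeAlgebra ℂ (Fin n) →ₗ[ℂ] FreeAlgebra ℂ (Fin n) ⊗[ℂ] FreeAlgebra ℂ (Fin n))
    (hD : ∀ j, IsNCDerivative n j (D j))
    -- the GNS-type representation of `L²(M,τ)` and the conjugate variables `ξ_j`
    {L : Type*} [NormedAddCommGroup L] [InnerProductSpace ℂ L] [CompleteSpace L]
    (ι : (H →L[ℂ] H) →ₗ[ℂ] L)
    (hι : ∀ a ∈ M, ∀ b ∈ M, ⟪ι a, ι b⟫_ℂ = τ (star a * b))
    (ξ : Fin n → L)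
    (hrel : ∀ (j : Fin n) (P : FreeAlgebra ℂ (Fin n)),
      tensorTrace τ
          ((Algebra.TensorProduct.map (FreeAlgebra.lift ℂ X) (FreeAlgebra.lift ℂ X))
            (D j P)) =
        ⟪ι (star ((FreeAlgebra.lift ℂ X) P)), ξ j⟫_ℂ) :
    ∀ P : FreeAlgebra ℂ (Fin n), (FreeAlgebra.lift ℂ X) P = 0 →
      ∀ j : Fin n,
        (Algebra.TensorProduct.map (FreeAlgebra.lift ℂ X) (FreeAlgebra.lift ℂ X))
          (D j P) = 0 := by
  classical
  intro P hP j
  set f : FreeAlgebra ℂ (Fin n) →ₐ[ℂ] (H →L[ℂ] H) := FreeAlgebra.lift ℂ X with hfdef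
  -- every evaluated polynomial lies in M
  have hmem : ∀ Q : FreeAlgebra ℂ (Fin n), f Q ∈ M := by
    intro Q
    refine FreeAlgebra.induction ℂ (Fin n) ?_ ?_ ?_ ?_ Q
    · intro r
      rw [AlgHom.commutes]
      exact M.toStarSubalgebra.algebraMap_mem r
    · intro i
      rw [show f (FreeAlgebra.ι ℂ i) = X i by rw [hfdef]; exact FreeAlgebra.lift_ι_apply X i]
      exact hXM i
    · intro a b ha hb
      rw [map_mul]; exact mul_mem ha hb
    · intro a b ha hb
      rw [map_add]; exact add_mem ha hb
  -- the range of evaluation is star-closed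
  have hstar : ∀ C : FreeAlgebra ℂ (Fin n), ∃ A, f A = star (f C) := by
    intro C
    refine FreeAlgebra.induction ℂ (Fin n)
      (motive := fun C => ∃ A, f A = star (f C)) ?_ ?_ ?_ ?_ C
    · intro r
      refine ⟨algebraMap ℂ _ (star r), ?_⟩
      rw [AlgHom.commutes, AlgHom.commutes, algebraMap_star_comm]
    · intro i
      refine ⟨FreeAlgebra.ι ℂ i, ?_⟩
      rw [show f (FreeAlgebra.ι ℂ i) = X i by rw [hfdef]; exact FreeAlgebra.lift_ι_apply X i, hXsa]
    · rintro a b ⟨A, hA⟩ ⟨B, hB⟩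
      exact ⟨B * A, by rw [map_mul, map_mul, star_mul, hA, hB]⟩
    · rintro a b ⟨A, hA⟩ ⟨B, hB⟩
      exact ⟨A + B, by rw [map_add, map_add, star_add, hA, hB]⟩
  -- decompose the derivative of P into a finite sum of pure tensors
  obtain ⟨S, hS⟩ := TensorProduct.exists_finset (D j P)
  have hu : (Algebra.TensorProduct.map f f) (D j P)
      = ∑ i ∈ S, f i.1 ⊗ₜ[ℂ] f i.2 := by
    rw [hS, map_sum]
    exact Finset.sum_congr rfl fun i _ => Algebra.TensorProduct.map_tmul f f i.1 i.2
  -- the evaluated sandwich identity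
  have h1 : ∀ A B : FreeAlgebra ℂ (Fin n),
      (Algebra.TensorProduct.map f f) (D j (A * (P * B)))
        = (f A ⊗ₜ[ℂ] 1) * ((Algebra.TensorProduct.map f f) (D j P) * (1 ⊗ₜ[ℂ] f B)) := by
    intro A B
    have e1 : D j (A * (P * B)) = D j A * (1 ⊗ₜ[ℂ] (P * B))
        + (A ⊗ₜ[ℂ] 1) * (D j P * (1 ⊗ₜ[ℂ] B) + (P ⊗ₜ[ℂ] 1) * D j B) := by
      rw [(hD j).1 A (P * B), (hD j).1 P B]
    rw [e1]
    simp only [map_add, map_mul, Algebra.TensorProduct.map_tmul, map_one, hP,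
      TensorProduct.tmul_zero, TensorProduct.zero_tmul, mul_zero, zero_mul, add_zero,
      zero_add, mul_add]
  -- the key scalar identity
  have key : ∀ A B : FreeAlgebra ℂ (Fin n),
      ∑ i ∈ S, τ (f A * f i.1) * τ (f i.2 * f B) = 0 := by
    intro A B
    have h2 := hrel j (A * (P * B))
    rw [show (Algebra.TensorProduct.map (FreeAlgebra.lift ℂ X) (FreeAlgebra.lift ℂ X))
        = Algebra.TensorProduct.map f f from rfl] at h2
    rw [h1 A B, hu] at h2
    rw [show f (A * (P * B)) = 0 by rw [map_mul, map_mul, hP, zero_mul, mul_zero]] at h2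
    rw [star_zero, map_zero, inner_zero_left] at h2
    rw [Finset.sum_mul, Finset.mul_sum, map_sum] at h2
    rw [← h2]
    refine Finset.sum_congr rfl fun i _ => ?_
    rw [Algebra.TensorProduct.tmul_mul_tmul, Algebra.TensorProduct.tmul_mul_tmul,
      one_mul, mul_one, tensorTrace_tmul]
  -- right contraction vanishes
  have key2 : ∀ A : FreeAlgebra ℂ (Fin n),
      ∑ i ∈ S, τ (f A * f i.1) • f i.2 = 0 := by
    intro A
    set Q : FreeAlgebra ℂ (Fin n) := ∑ i ∈ S, τ (f A * f i.1) • i.2 with hQdef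
    have hfQ : f Q = ∑ i ∈ S, τ (f A * f i.1) • f i.2 := by
      rw [hQdef, map_sum]
      exact Finset.sum_congr rfl fun i _ => map_smul f _ _
    obtain ⟨B, hB⟩ := hstar Q
    have h3 : τ (f Q * f B) = 0 := by
      rw [hfQ, Finset.sum_mul, map_sum, ← key A B]
      refine Finset.sum_congr rfl fun i _ => ?_
      rw [smul_mul_assoc, map_smul, smul_eq_mul]
    rw [hB] at h3
    have hsm : star (f Q) ∈ M := by rw [← hB]; exact hmem B
    have h4 : τ (star (f Q) * f Q) = 0 := by
      rw [← htr (f Q) (hmem Q) (star (f Q)) hsm]; exact h3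
    have h5 := hfaith (f Q) (hmem Q) h4
    rw [hfQ] at h5
    exact h5
  -- the finite-dimensional linear algebra step
  set gset : Set (H →L[ℂ] H) := ↑(S.image fun i => f i.1) with hgset
  have hfin : FiniteDimensional ℂ (Submodule.span ℂ gset) :=
    FiniteDimensional.span_of_finite ℂ (S.image fun i => f i.1).finite_toSet
  set V : Submodule ℂ (H →L[ℂ] H) := Submodule.span ℂ gset with hV
  set m := Module.finrank ℂ V with hm
  set b : Module.Basis (Fin m) ℂ V := Module.finBasis ℂ V with hb
  have hmemV : ∀ i ∈ S, f i.1 ∈ V := by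
    intro i hi
    refine Submodule.subset_span ?_
    simp only [hgset, Finset.coe_image, Set.mem_image, Finset.mem_coe]
    exact ⟨i, hi, rfl⟩
  set vv : FreeAlgebra ℂ (Fin n) × FreeAlgebra ℂ (Fin n) → V :=
    fun i => if h : i ∈ S then ⟨f i.1, hmemV i h⟩ else 0 with hvv
  set c : FreeAlgebra ℂ (Fin n) × FreeAlgebra ℂ (Fin n) → Fin m → ℂ :=
    fun i t => b.repr (vv i) t with hc
  have hdecomp : ∀ i ∈ S, f i.1 = ∑ t, c i t • ((b t : V) : H →L[ℂ] H) := by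
    intro i hi
    have h := b.sum_repr (vv i)
    have h2 := congrArg (Subtype.val : V → (H →L[ℂ] H)) h
    rw [show ((vv i : V) : H →L[ℂ] H) = f i.1 by rw [hvv]; simp [hi]] at h2
    rw [← h2]
    push_cast
    rfl
  set w : Fin m → (H →L[ℂ] H) := fun t => ∑ i ∈ S, c i t • f i.2 with hw
  have hud : (Algebra.TensorProduct.map f f) (D j P)
      = ∑ t, ((b t : V) : H →L[ℂ] H) ⊗ₜ[ℂ] w t := by
    rw [hu]
    calc ∑ i ∈ S, f i.1 ⊗ₜ[ℂ] f i.2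
        = ∑ i ∈ S, ∑ t, c i t • (((b t : V) : H →L[ℂ] H) ⊗ₜ[ℂ] f i.2) := by
          refine Finset.sum_congr rfl fun i hi => ?_
          rw [hdecomp i hi, TensorProduct.sum_tmul]
          exact Finset.sum_congr rfl fun t _ => by rw [TensorProduct.smul_tmul']
      _ = ∑ t, ∑ i ∈ S, c i t • (((b t : V) : H →L[ℂ] H) ⊗ₜ[ℂ] f i.2) := Finset.sum_comm
      _ = ∑ t, ((b t : V) : H →L[ℂ] H) ⊗ₜ[ℂ] w t := by
          refine Finset.sum_congr rfl fun t _ => ?_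
          rw [hw]
          simp only [TensorProduct.tmul_sum, TensorProduct.tmul_smul]
  have key3 : ∀ A : FreeAlgebra ℂ (Fin n),
      ∑ t, τ (f A * ((b t : V) : H →L[ℂ] H)) • w t = 0 := by
    intro A
    have expand : ∀ i ∈ S, τ (f A * f i.1)
        = ∑ t, c i t * τ (f A * ((b t : V) : H →L[ℂ] H)) := by
      intro i hi
      rw [hdecomp i hi, Finset.mul_sum, map_sum]
      refine Finset.sum_congr rfl fun t _ => ?_
      rw [mul_smul_comm, map_smul, smul_eq_mul]
    calc ∑ t, τ (f A * ((b t : V) : H →L[ℂ] H)) • w t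
        = ∑ t, ∑ i ∈ S, (c i t * τ (f A * ((b t : V) : H →L[ℂ] H))) • f i.2 := by
          refine Finset.sum_congr rfl fun t _ => ?_
          rw [hw, Finset.smul_sum]
          refine Finset.sum_congr rfl fun i _ => ?_
          rw [smul_smul, mul_comm]
      _ = ∑ i ∈ S, (∑ t, c i t * τ (f A * ((b t : V) : H →L[ℂ] H))) • f i.2 := by
          rw [Finset.sum_comm]
          exact Finset.sum_congr rfl fun i _ => (Finset.sum_smul).symm
      _ = ∑ i ∈ S, τ (f A * f i.1) • f i.2 :=
          Finset.sum_congr rfl fun i hi => by rw [← expand i hi]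
      _ = 0 := key2 A
  -- the pairing map is jointly surjective
  set Θ : FreeAlgebra ℂ (Fin n) →ₗ[ℂ] (Fin m → ℂ) :=
    LinearMap.pi (fun t => τ ∘ₗ (LinearMap.mulRight ℂ ((b t : V) : H →L[ℂ] H)) ∘ₗ
      f.toLinearMap) with hΘdef
  have hΘ : ∀ A t, Θ A t = τ (f A * ((b t : V) : H →L[ℂ] H)) := fun A t => rfl
  have hVle : V ≤ Subalgebra.toSubmodule f.range := by
    rw [hV]
    refine Submodule.span_le.2 ?_
    rintro x hx
    simp only [hgset, Finset.coe_image, Set.mem_image, Finset.mem_coe] at hx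
    obtain ⟨i, _, rfl⟩ := hx
    exact ⟨i.1, rfl⟩
  have hsurj : LinearMap.range Θ = ⊤ := by
    by_contra hne
    obtain ⟨φ, hφ0, hφ⟩ := Submodule.exists_dual_map_eq_bot_of_lt_top
      (lt_top_iff_ne_top.mpr hne) inferInstance
    have hφΘ : ∀ A, φ (Θ A) = 0 := by
      intro A
      have hx : φ (Θ A) ∈ (LinearMap.range Θ).map φ := ⟨Θ A, ⟨A, rfl⟩, rfl⟩
      rw [hφ, Submodule.mem_bot] at hx
      exact hx
    set lam : Fin m → ℂ := fun t => φ (fun s => if t = s then 1 else 0) with hlam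
    have hφa : ∀ x : Fin m → ℂ, φ x = ∑ t, x t • lam t :=
      fun x => LinearMap.pi_apply_eq_sum_univ φ x
    have hlamne : ∃ t, lam t ≠ 0 := by
      by_contra h
      push_neg at h
      refine hφ0 (LinearMap.ext fun x => ?_)
      rw [hφa x]
      simp [h]
    obtain ⟨t0, ht0⟩ := hlamne
    set v : H →L[ℂ] H := ∑ t, lam t • ((b t : V) : H →L[ℂ] H) with hv
    have hτv : ∀ A, τ (f A * v) = 0 := by
      intro A
      have h := hφΘ A
      rw [hφa (Θ A)] at h
      rw [hv, Finset.mul_sum, map_sum, ← h]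
      refine Finset.sum_congr rfl fun t _ => ?_
      rw [mul_smul_comm, map_smul, smul_eq_mul, hΘ, smul_eq_mul, mul_comm]
    have hvV : v ∈ V := by
      rw [hv]
      exact Submodule.sum_mem _ fun t _ => Submodule.smul_mem _ _ (b t).2
    obtain ⟨Cv, hCv⟩ : ∃ C, f C = v := hVle hvV
    obtain ⟨Av, hAv⟩ := hstar Cv
    rw [hCv] at hAv
    have hτvv : τ (star v * v) = 0 := by rw [← hAv]; exact hτv Av
    have hvM : v ∈ M := by rw [← hCv]; exact hmem Cv
    have hv0 : v = 0 := hfaith v hvM hτvv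
    have hsum0 : (∑ t, lam t • b t : V) = 0 := by
      refine Subtype.ext ?_
      push_cast
      rw [← hv]
      exact hv0
    have := Fintype.linearIndependent_iff.mp b.linearIndependent lam hsum0 t0
    exact ht0 this
  -- extract dual elements and conclude each w t = 0
  have hwt : ∀ t, w t = 0 := by
    intro t
    have hmt : (fun s => if t = s then (1:ℂ) else 0) ∈ LinearMap.range Θ := by
      rw [hsurj]; trivial
    obtain ⟨A, hA⟩ := hmt
    have h := key3 A
    have e : ∀ s, τ (f A * ((b s : V) : H →L[ℂ] H)) = if t = s then 1 else 0 := by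
      intro s
      rw [← hΘ A s, hA]
    rw [Finset.sum_congr rfl (fun s _ => by rw [e s])] at h
    simpa using h
  rw [show (Algebra.TensorProduct.map (FreeAlgebra.lift ℂ X) (FreeAlgebra.lift ℂ X))
      = Algebra.TensorProduct.map f f from rfl, hud]
  simp [hwt]
end

section
/- Let (M,τ) be a tracial W*-probability space and X_1,…,X_n ∈ M self-adjoint such that for every polynomial P, P(X) = 0 implies (∂_j P)(X) = 0 for all j. Then X_1,…,X_n satisfy no nontrivial algebraic relation: P(X_1,…,X_n) = 0 for P ∈ ℂ⟨Z_1,…,Z_n⟩ forces P = 0. -/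
open scoped TensorProduct InnerProductSpace

noncomputable section

variable {n : ℕ}


/-- The monomial `Z_{w₁} ⋯ Z_{w_k}` in the free algebra. -/
def mA (n : ℕ) (w : List (Fin n)) : FreeAlgebra ℂ (Fin n) :=
  (w.map (FreeAlgebra.ι ℂ)).prod

/-- Coefficient of the word `u` in a free-algebra element. -/
def cf (n : ℕ) (u : List (Fin n)) : FreeAlgebra ℂ (Fin n) →ₗ[ℂ] ℂ where
  toFun P := (FreeAlgebra.equivMonoidAlgebraFreeMonoid P).coeff (FreeMonoid.ofList u)
  map_add' P Q := by simp [map_add]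
  map_smul' c P := by simp [map_smul]

lemma cf_apply (u : List (Fin n)) (P : FreeAlgebra ℂ (Fin n)) :
    cf n u P = (FreeAlgebra.equivMonoidAlgebraFreeMonoid P).coeff (FreeMonoid.ofList u) := rfl

lemma eFA_ι (i : Fin n) :
    FreeAlgebra.equivMonoidAlgebraFreeMonoid (FreeAlgebra.ι ℂ i)
      = MonoidAlgebra.single (FreeMonoid.of i) (1 : ℂ) := by
  simp [FreeAlgebra.equivMonoidAlgebraFreeMonoid]

lemma eFA_mA (w : List (Fin n)) :
    FreeAlgebra.equivMonoidAlgebraFreeMonoid (mA n w)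
      = MonoidAlgebra.single (FreeMonoid.ofList w) (1 : ℂ) := by
  induction w with
  | nil =>
      simp [mA, MonoidAlgebra.one_def]
  | cons i w ih =>
      rw [mA, List.map_cons, List.prod_cons, map_mul, eFA_ι, ← mA, ih,
        MonoidAlgebra.single_mul_single, one_mul]
      rfl

lemma cf_mA (u w : List (Fin n)) :
    cf n u (mA n w) = if w = u then 1 else 0 := by
  show (FreeAlgebra.equivMonoidAlgebraFreeMonoid (mA n w)).coeff (FreeMonoid.ofList u)
      = if w = u then 1 else 0
  rw [eFA_mA, MonoidAlgebra.coeff_single]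
  by_cases h : w = u
  · subst h; rw [if_pos rfl, Finsupp.single_eq_same]
  · rw [if_neg h, Finsupp.single_eq_of_ne (fun hc => h (FreeMonoid.ofList.injective hc).symm)]

lemma cf_one (u : List (Fin n)) :
    cf n u (1 : FreeAlgebra ℂ (Fin n)) = if u = [] then 1 else 0 := by
  have : (1 : FreeAlgebra ℂ (Fin n)) = mA n [] := by simp [mA]
  rw [this, cf_mA]
  by_cases h : u = [] <;> simp [h, eq_comm]

lemma cf_ext {P : FreeAlgebra ℂ (Fin n)} (h : ∀ u, cf n u P = 0) : P = 0 := by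
  apply FreeAlgebra.equivMonoidAlgebraFreeMonoid.injective
  rw [map_zero]
  ext w
  simpa [cf_apply] using h w.toList

lemma decomp (P : FreeAlgebra ℂ (Fin n)) :
    P = ∑ w ∈ (FreeAlgebra.equivMonoidAlgebraFreeMonoid P).coeff.support,
      (FreeAlgebra.equivMonoidAlgebraFreeMonoid P).coeff w • mA n w.toList := by
  apply FreeAlgebra.equivMonoidAlgebraFreeMonoid.injective
  rw [map_sum]
  conv_lhs => rw [← MonoidAlgebra.sum_coeff_single (FreeAlgebra.equivMonoidAlgebraFreeMonoid P)]
  rw [Finsupp.sum]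
  refine Finset.sum_congr rfl fun w _ => ?_
  rw [map_smul, eFA_mA]
  rw [MonoidAlgebra.smul_single', mul_one, FreeMonoid.ofList_toList]


/-- `Fm T (x ⊗ y) = T x • y`. -/
def Fm (n : ℕ) (T : FreeAlgebra ℂ (Fin n) →ₗ[ℂ] ℂ) :
    FreeAlgebra ℂ (Fin n) ⊗[ℂ] FreeAlgebra ℂ (Fin n) →ₗ[ℂ] FreeAlgebra ℂ (Fin n) :=
  (TensorProduct.lid ℂ (FreeAlgebra ℂ (Fin n))).toLinearMap ∘ₗ
    TensorProduct.map T LinearMap.id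

lemma Fm_tmul (T : FreeAlgebra ℂ (Fin n) →ₗ[ℂ] ℂ) (x y : FreeAlgebra ℂ (Fin n)) :
    Fm n T (x ⊗ₜ[ℂ] y) = T x • y := by
  simp [Fm]

/-- Explicit formula for the noncommutative derivative of a monomial. -/
def DD (j : Fin n) : List (Fin n) → FreeAlgebra ℂ (Fin n) ⊗[ℂ] FreeAlgebra ℂ (Fin n)
  | [] => 0
  | i :: w => (if i = j then (1 : FreeAlgebra ℂ (Fin n)) ⊗ₜ[ℂ] mA n w else 0) +
      ((FreeAlgebra.ι ℂ i) ⊗ₜ[ℂ] (1 : FreeAlgebra ℂ (Fin n))) * DD j w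

lemma D_one {j : Fin n}
    {Dj : FreeAlgebra ℂ (Fin n) →ₗ[ℂ] FreeAlgebra ℂ (Fin n) ⊗[ℂ] FreeAlgebra ℂ (Fin n)}
    (hD : IsNCDerivative n j Dj) : Dj 1 = 0 := by
  have h := hD.1 1 1
  rw [mul_one] at h
  have h1 : ((1 : FreeAlgebra ℂ (Fin n)) ⊗ₜ[ℂ] (1 : FreeAlgebra ℂ (Fin n)))
      = (1 : FreeAlgebra ℂ (Fin n) ⊗[ℂ] FreeAlgebra ℂ (Fin n)) :=
    Algebra.TensorProduct.one_def.symm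
  rw [h1, mul_one, one_mul] at h
  have := congrArg (fun t => t - Dj 1) h
  simpa using this.symm

lemma D_mA {j : Fin n}
    {Dj : FreeAlgebra ℂ (Fin n) →ₗ[ℂ] FreeAlgebra ℂ (Fin n) ⊗[ℂ] FreeAlgebra ℂ (Fin n)}
    (hD : IsNCDerivative n j Dj) : ∀ w : List (Fin n), Dj (mA n w) = DD j w := by
  intro w
  induction w with
  | nil =>
      show Dj (1 : FreeAlgebra ℂ (Fin n)) = 0
      exact D_one hD
  | cons i w ih =>
      have : mA n (i :: w) = FreeAlgebra.ι ℂ i * mA n w := by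
        simp [mA]
      rw [this, hD.1, ih, hD.2, DD]
      congr 1
      by_cases h : i = j
      · rw [if_pos h, if_pos h]
        rw [Algebra.TensorProduct.tmul_mul_tmul, one_mul, one_mul]
      · rw [if_neg h, if_neg h, zero_mul]

/-- Key coefficient computation. -/
lemma key (T : FreeAlgebra ℂ (Fin n) →ₗ[ℂ] ℂ) (j : Fin n) :
    ∀ (w : List (Fin n)) (a : FreeAlgebra ℂ (Fin n)) (u : List (Fin n)),
      w.length ≤ u.length + 1 →
      cf n u (Fm n T ((a ⊗ₜ[ℂ] 1) * DD j w)) = if w = j :: u then T a else 0 := by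
  intro w
  induction w with
  | nil =>
      intro a u _
      rw [if_neg (by simp)]
      show cf n u (Fm n T ((a ⊗ₜ[ℂ] 1) * 0)) = 0
      rw [mul_zero, map_zero, map_zero]
  | cons i w ih =>
      intro a u hlen
      rw [DD, mul_add, map_add, map_add]
      have h2 : cf n u (Fm n T ((a ⊗ₜ[ℂ] 1) *
          (((FreeAlgebra.ι ℂ i) ⊗ₜ[ℂ] (1 : FreeAlgebra ℂ (Fin n))) * DD j w))) = 0 := by
        rw [← mul_assoc, Algebra.TensorProduct.tmul_mul_tmul, mul_one]
        rw [ih (a * FreeAlgebra.ι ℂ i) u (by simpa using Nat.le_of_succ_le_succ hlen |>.trans (Nat.le_succ _))]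
        rw [if_neg]
        intro hc
        have : w.length = u.length + 1 := by rw [hc]; simp
        have hle : w.length ≤ u.length := Nat.le_of_succ_le_succ hlen
        omega
      rw [h2, add_zero]
      by_cases h : i = j
      · rw [if_pos h]
        rw [Algebra.TensorProduct.tmul_mul_tmul, mul_one, one_mul, Fm_tmul, map_smul]
        rw [cf_mA]
        by_cases hw : w = u
        · rw [if_pos hw, if_pos (by rw [h, hw]), smul_eq_mul, mul_one]
        · rw [if_neg hw, if_neg (by simp [h, hw]), smul_eq_mul, mul_zero]
      · rw [if_neg h, mul_zero, map_zero, map_zero, if_neg (by simp [Ne.symm, h])]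


lemma delta_cf (T : FreeAlgebra ℂ (Fin n) →ₗ[ℂ] ℂ) (hT : T 1 = 1) (j : Fin n)
    {Dj : FreeAlgebra ℂ (Fin n) →ₗ[ℂ] FreeAlgebra ℂ (Fin n) ⊗[ℂ] FreeAlgebra ℂ (Fin n)}
    (hD : IsNCDerivative n j Dj) (P : FreeAlgebra ℂ (Fin n)) (u : List (Fin n))
    (hdeg : ∀ w ∈ (FreeAlgebra.equivMonoidAlgebraFreeMonoid P).coeff.support,
      (FreeMonoid.toList w).length ≤ u.length + 1) :
    cf n u (Fm n T (Dj P)) = cf n (j :: u) P := by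
  conv_lhs => rw [decomp P]
  conv_rhs => rw [decomp P]
  simp only [map_sum, map_smul]
  refine Finset.sum_congr rfl fun w hw => ?_
  congr 1
  rw [D_mA hD]
  have h1 : DD j w.toList = ((1 : FreeAlgebra ℂ (Fin n)) ⊗ₜ[ℂ] (1 : FreeAlgebra ℂ (Fin n))) * DD j w.toList := by
    rw [Algebra.TensorProduct.one_def.symm, one_mul]
  rw [h1, key T j w.toList 1 u (hdeg w hw), hT, cf_mA]

/-- compatibility of evaluation with `Fm`. -/
lemma ev_Fm {E : Type*} [Ring E] [Algebra ℂ E]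
    (ev : FreeAlgebra ℂ (Fin n) →ₐ[ℂ] E) (τ : E →ₗ[ℂ] ℂ)
    (t : FreeAlgebra ℂ (Fin n) ⊗[ℂ] FreeAlgebra ℂ (Fin n)) :
    ev (Fm n (τ ∘ₗ ev.toLinearMap) t) =
      ((TensorProduct.lid ℂ E).toLinearMap ∘ₗ TensorProduct.map τ LinearMap.id)
        ((Algebra.TensorProduct.map ev ev) t) := by
  induction t using TensorProduct.induction_on with
  | zero => simp
  | tmul x y => simp [Fm_tmul]
  | add x y hx hy => rw [map_add, map_add, map_add, map_add, hx, hy]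

end

/-- let `(M,τ)` be a tracial `W*`-probability space and
`X_1,…,X_n ∈ M` self-adjoint such that for every polynomial `P`,
`P(X) = 0` implies `(∂_j P)(X) = 0` for all `j`.  Then `X_1,…,X_n` satisfy no
nontrivial algebraic relation: `P(X_1,…,X_n) = 0` forces `P = 0`. -/
theorem stmt5 {H : Type*} [NormedAddCommGroup H] [InnerProductSpace ℂ H] [CompleteSpace H]
    (n : ℕ) (M : VonNeumannAlgebra H)
    (τ : (H →L[ℂ] H) →ₗ[ℂ] ℂ)
    (hone : τ 1 = 1)
    (htr : ∀ a ∈ M, ∀ b ∈ M, τ (a * b) = τ (b * a))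
    (hpos : ∀ a ∈ M, 0 ≤ (τ (star a * a)).re ∧ (τ (star a * a)).im = 0)
    (hfaith : ∀ a ∈ M, τ (star a * a) = 0 → a = 0)
    (hnormal : ∃ e : ℕ → H, ∀ a ∈ M, τ a = ∑' i, ⟪e i, a (e i)⟫_ℂ)
    (X : Fin n → (H →L[ℂ] H)) (hXM : ∀ i, X i ∈ M) (hXsa : ∀ i, star (X i) = X i)
    (D : ∀ _ : Fin n,
      FreeAlgebra ℂ (Fin n) →ₗ[ℂ] FreeAlgebra ℂ (Fin n) ⊗[ℂ] FreeAlgebra ℂ (Fin n))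
    (hD : ∀ j, IsNCDerivative n j (D j))
    (hred : ∀ P : FreeAlgebra ℂ (Fin n), (FreeAlgebra.lift ℂ X) P = 0 →
      ∀ j : Fin n,
        (Algebra.TensorProduct.map (FreeAlgebra.lift ℂ X) (FreeAlgebra.lift ℂ X))
          (D j P) = 0) :
    ∀ P : FreeAlgebra ℂ (Fin n), (FreeAlgebra.lift ℂ X) P = 0 → P = 0 := by
  intro P hP
  set T : FreeAlgebra ℂ (Fin n) →ₗ[ℂ] ℂ :=
    τ ∘ₗ (FreeAlgebra.lift ℂ X).toLinearMap with hTdef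
  have hT1 : T 1 = 1 := by
    rw [hTdef]
    simp only [LinearMap.comp_apply, AlgHom.toLinearMap_apply, map_one]
    exact hone
  have main : ∀ d : ℕ, ∀ Q : FreeAlgebra ℂ (Fin n),
      (∀ u : List (Fin n), d < u.length → cf n u Q = 0) →
      (FreeAlgebra.lift ℂ X) Q = 0 → Q = 0 := by
    intro d
    induction d with
    | zero =>
        intro Q hQ hev
        have hc : ∀ u, cf n u (Q - cf n [] Q • 1) = 0 := by
          intro u
          rw [map_sub, map_smul, cf_one]
          by_cases hu : u = []
          · subst hu; simp
          · rw [if_neg hu, smul_zero, hQ u (List.length_pos_iff.2 hu), zero_sub, neg_zero]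
        have hQr : Q = cf n [] Q • 1 := sub_eq_zero.mp (cf_ext hc)
        have hev1 : (cf n [] Q) • (1 : H →L[ℂ] H) = 0 := by
          rw [← map_one (FreeAlgebra.lift ℂ X), ← map_smul, ← hQr, hev]
        have hc0 : cf n [] Q = 0 := by
          have h2 := congrArg τ hev1
          rw [map_smul, map_zero, hone, smul_eq_mul, mul_one] at h2
          exact h2
        rw [hQr, hc0, zero_smul]
    | succ d ih =>
        intro Q hQ hev
        have hdegQ : ∀ w ∈ (FreeAlgebra.equivMonoidAlgebraFreeMonoid Q).coeff.support,
            (FreeMonoid.toList w).length ≤ d + 1 := by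
          intro w hw
          by_contra hgt
          push_neg at hgt
          apply Finsupp.mem_support_iff.1 hw
          have h0 : cf n (FreeMonoid.toList w) Q = 0 := hQ (FreeMonoid.toList w) (by omega)
          rw [cf_apply, FreeMonoid.ofList_toList] at h0
          exact h0
        have hDelta : ∀ j : Fin n, Fm n T (D j Q) = 0 := by
          intro j
          apply ih
          · intro u hu
            rw [delta_cf T hT1 j (hD j) Q u (fun w hw => (hdegQ w hw).trans (by omega))]
            exact hQ (j :: u) (by simp; omega)
          · rw [hTdef, ev_Fm (FreeAlgebra.lift ℂ X) τ (D j Q), hred Q hev j, map_zero]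
        have hQ' : ∀ u : List (Fin n), d < u.length → cf n u Q = 0 := by
          intro u hu
          by_cases hlen : d + 1 < u.length
          · exact hQ u hlen
          · have hlen' : u.length = d + 1 := by omega
            cases u with
            | nil => simp at hlen'
            | cons j u' =>
                have hu' : u'.length = d := by
                  simp at hlen'; omega
                have hstep : cf n u' (Fm n T (D j Q)) = cf n (j :: u') Q :=
                  delta_cf T hT1 j (hD j) Q u' (fun w hw => by
                    have := hdegQ w hw; omega)
                rw [← hstep, hDelta j, map_zero]
        exact ih Q hQ' hev
  apply main ((FreeAlgebra.equivMonoidAlgebraFreeMonoid P).coeff.support.sup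
      fun w => (FreeMonoid.toList w).length) P _ hP
  intro u hu
  by_contra hne
  have hmem : FreeMonoid.ofList u ∈ (FreeAlgebra.equivMonoidAlgebraFreeMonoid P).coeff.support := by
    rw [Finsupp.mem_support_iff]
    intro h0
    exact hne (by rw [cf_apply]; exact h0)
  have hle := Finset.le_sup (f := fun w => (FreeMonoid.toList w).length) hmem
  simp only [FreeMonoid.toList_ofList] at hle
  omega
end
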